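/- Let K have characteristic zero and let V be a vector space. In the bialgebra Sym(V) with reduced coproduct Δ̄(f) := Δ(f) − f⊗1 − 1⊗f defined on the augmentation ideal Sym^{≥1}(V), an element f ∈ Sym^{≥1}(V) satisfies Δ̄(f) = 0 if and only if f ∈ V (i.e. the primitive elements of Sym(V) are exactly the linear polynomials). -/

import Mathlib

open scoped TensorProduct
open MvPolynomial

lemma coeff_double_aux {K σ : Type*} [CommRing K] (f : MvPolynomial σ K) (d : σ →₀ ℕ) :
    coeff d (aeval (fun i => 2 * X i : σ → MvPolynomial σ K) f)
      = 2 ^ (d.sum fun _ n => n) * coeff d f := by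
  classical
  induction f using MvPolynomial.induction_on' with
  | add p q hp hq => rw [map_add, coeff_add, hp, hq, coeff_add, mul_add]
  | monomial e c =>
    have h1 : (aeval (fun i => 2 * X i : σ → MvPolynomial σ K)) (monomial e c)
        = C (2 ^ (e.sum fun _ n => n)) * monomial e c := by
      rw [aeval_monomial]
      have : (e.prod fun i n => (2 * X i : MvPolynomial σ K) ^ n)
          = 2 ^ (e.sum fun _ n => n) * e.prod fun i n => (X i : MvPolynomial σ K) ^ n := by
        simp only [Finsupp.prod, Finsupp.sum, mul_pow, Finset.prod_mul_distrib,
          Finset.prod_pow_eq_pow_sum]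
      rw [this, monomial_eq, algebraMap_eq,
        show (2 : MvPolynomial σ K) = C (2 : K) from (map_ofNat C 2).symm, ← map_pow]
      ring
    rw [h1, coeff_C_mul, coeff_monomial]
    split_ifs with h
    · subst h; ring
    · ring

lemma sum_eq_one_aux {σ : Type*} {d : σ →₀ ℕ} (h : (d.sum fun _ n => n) = 1) :
    ∃ i, d = Finsupp.single i 1 := by
  classical
  have hc : (Finsupp.toMultiset d).card = 1 := by
    rw [Finsupp.card_toMultiset]; exact h
  obtain ⟨a, ha⟩ := Multiset.card_eq_one.mp hc
  refine ⟨a, ?_⟩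
  have := congrArg Multiset.toFinsupp ha
  rwa [Finsupp.toMultiset_toFinsupp, Multiset.toFinsupp_singleton] at this

/-- Over a field `K` of characteristic zero, in the bialgebra `Sym(V)` (modelled by
`MvPolynomial σ K`, with coproduct `Δ` determined by `Δ(x) = 1⊗x + x⊗1` on generators)
an element `f` of the augmentation ideal `Sym^{≥1}(V)` satisfies `Δ̄(f) = 0`, i.e.
`Δ(f) = f⊗1 + 1⊗f`, if and only if `f ∈ V`: the primitive elements of `Sym(V)` are
exactly the linear polynomials. -/
theorem primitives_of_symAlg (K σ : Type*) [Field K] [CharZero K]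
    (Δ : MvPolynomial σ K →ₐ[K] (MvPolynomial σ K ⊗[K] MvPolynomial σ K))
    (hΔ : ∀ i : σ, Δ (X i) = 1 ⊗ₜ[K] X i + X i ⊗ₜ[K] 1) :
    ∀ f : MvPolynomial σ K, constantCoeff f = 0 →
      (Δ f = f ⊗ₜ[K] 1 + 1 ⊗ₜ[K] f ↔
        f ∈ Submodule.span K (Set.range (X : σ → MvPolynomial σ K))) := by
  intro f _hf
  constructor
  · intro h
    -- compose with the multiplication map to get `f(2X) = 2f`
    set m : MvPolynomial σ K ⊗[K] MvPolynomial σ K →ₐ[K] MvPolynomial σ K :=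
      Algebra.TensorProduct.lmul' K
    have hm : ∀ a b : MvPolynomial σ K, m (a ⊗ₜ[K] b) = a * b := fun a b =>
      Algebra.TensorProduct.lmul'_apply_tmul a b
    have key : m.comp Δ = aeval (fun i => 2 * X i : σ → MvPolynomial σ K) := by
      apply MvPolynomial.algHom_ext
      intro i
      simp only [AlgHom.comp_apply, hΔ, map_add, hm, aeval_X]
      ring
    have hf2 : aeval (fun i => 2 * X i : σ → MvPolynomial σ K) f = f + f := by
      rw [← key]
      simp only [AlgHom.comp_apply, h, map_add, hm, one_mul, mul_one]
    -- coefficientwise consequence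
    have hcoeff : ∀ d : σ →₀ ℕ, d ∈ f.support → (d.sum fun _ n => n) = 1 := by
      intro d hd
      have h1 : (2 : K) ^ (d.sum fun _ n => n) * coeff d f = 2 * coeff d f := by
        have := coeff_double_aux f d
        rw [hf2, coeff_add] at this
        rw [← this]; ring
      have hne : coeff d f ≠ 0 := MvPolynomial.mem_support_iff.mp hd
      have h2 : (2 : K) ^ (d.sum fun _ n => n) = 2 :=
        mul_right_cancel₀ hne h1
      have h3 : (2 : ℕ) ^ (d.sum fun _ n => n) = 2 ^ 1 := by
        have : ((2 ^ (d.sum fun _ n => n) : ℕ) : K) = ((2 ^ 1 : ℕ) : K) := by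
          push_cast; rw [h2]
        exact_mod_cast this
      exact Nat.pow_right_injective le_rfl h3
    -- conclude f is in the span of the X's
    rw [f.as_sum]
    apply Submodule.sum_mem
    intro d hd
    obtain ⟨i, rfl⟩ := sum_eq_one_aux (hcoeff d hd)
    have : monomial (Finsupp.single i 1) (coeff (Finsupp.single i 1) f)
        = coeff (Finsupp.single i 1) f • X i := by
      rw [MvPolynomial.X, smul_monomial, smul_eq_mul, mul_one]
    rw [this]
    exact Submodule.smul_mem _ _ (Submodule.subset_span ⟨i, rfl⟩)
  · intro h
    clear _hf
    induction h using Submodule.span_induction with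
    | mem x hx =>
      obtain ⟨i, rfl⟩ := hx
      rw [hΔ i, add_comm]
    | zero => simp
    | add x y _ _ hx hy =>
      rw [map_add, hx, hy, TensorProduct.add_tmul, TensorProduct.tmul_add]
      abel
    | smul c x _ hx =>
      rw [map_smul, hx, smul_add, TensorProduct.smul_tmul', TensorProduct.tmul_smul]
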